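/- Let (τ_i)_{i∈ℕ} be a sequence of play-measures whose weights sum to some λ ∈ [0,1]. If a play-measure σ is uniformly below ∑_{i∈ℕ} τ_i (i.e., there is d > 0 with σ(s) + d ≤ (∑_i τ_i)(s) for all plays s in the support of σ), then there exists n ∈ ℕ such that σ is uniformly below ∑_{i<n} τ_i. -/

import Mathlib

open scoped ENNReal Classical

/-- Active-ending plays over signature `(K, ar)`: alternating sequences of
outputs `k : K` and inputs `i : ar k`. -/
inductive APlay (K : Type) (ar : K → Type) : Type
  | nil : APlay K ar
  | cons (k : K) (i : ar k) (s : APlay K ar) : APlay K ar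

variable {K : Type} {ar : K → Type}

/-- Append an output-input pair at the end of an active-ending play. -/
def APlay.snoc : APlay K ar → (k : K) → ar k → APlay K ar
  | .nil, k, i => .cons k i .nil
  | .cons l j s, k, i => .cons l j (s.snoc k i)

/-- The number of output-input cycles in an active-ending play. -/
def APlay.len : APlay K ar → ℕ
  | .nil => 0
  | .cons _ _ s => s.len + 1

/-- A play-measure: values in `[0,1]` on passive-ending plays (an active play
followed by an output), with `σ_act t = ∑_k σ_pass (t.k)` and
`σ_act (s.k.i) = σ_pass (s.k)`. -/
structure PlayMeasure (K : Type) (ar : K → Type) where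
  pass : APlay K ar → K → ℝ≥0∞
  le_one : ∀ t, (∑' k, pass t k) ≤ 1
  consistent : ∀ s k (i : ar k), pass s k = ∑' l, pass (s.snoc k i) l

/-- The value of a play-measure on an active-ending play. -/
noncomputable def PlayMeasure.act (σ : PlayMeasure K ar) (t : APlay K ar) : ℝ≥0∞ :=
  ∑' k, σ.pass t k

/-- The weight of a play-measure. -/
noncomputable def PlayMeasure.weight (σ : PlayMeasure K ar) : ℝ≥0∞ := σ.act .nil

/-- A partial counterstrategy, given by its set of active-ending plays. -/
structure Counterstrategy (K : Type) (ar : K → Type) where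
  act : Set (APlay K ar)
  nil_mem : APlay.nil ∈ act
  prefix_closed : ∀ (s : APlay K ar) (k : K) (i : ar k), s.snoc k i ∈ act → s ∈ act
  deterministic : ∀ (s : APlay K ar) (k : K) (i j : ar k),
      s.snoc k i ∈ act → s.snoc k j ∈ act → i = j

/-- The passive-ending play `s.k` is a `ρ`-failure: it is in `ρ_pass`
and has no prescribed input. -/
def Counterstrategy.Fails (ρ : Counterstrategy K ar) (s : APlay K ar) (k : K) : Prop :=
  s ∈ ρ.act ∧ ∀ i : ar k, s.snoc k i ∉ ρ.act

/-- `P^m_ρ(σ)`: the sum of `σ_act` over the length-`m` plays in `ρ_act`. -/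
noncomputable def contProb (ρ : Counterstrategy K ar) (σ : PlayMeasure K ar) (m : ℕ) : ℝ≥0∞ :=
  ∑' s : {s : APlay K ar // s ∈ ρ.act ∧ s.len = m}, σ.act s.1

/-- The sum of `σ_pass` over the `ρ`-failures of length `m`. -/
noncomputable def failProb (ρ : Counterstrategy K ar) (σ : PlayMeasure K ar) (m : ℕ) : ℝ≥0∞ :=
  ∑' p : {p : APlay K ar × K // ρ.Fails p.1 p.2 ∧ p.1.len = m}, σ.pass p.1.1 p.1.2

/-- A play-measure is victorious when against every partial counterstrategy,
the probability of play continuing forever is zero. -/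
def Victorious (σ : PlayMeasure K ar) : Prop :=
  ∀ ρ : Counterstrategy K ar, (⨅ m, contProb ρ σ m) = 0

/-- The length-`n` prefix of an infinite play. -/
def prefixPlay (f : ℕ → Σ k : K, ar k) : ℕ → APlay K ar
  | 0 => .nil
  | n + 1 => (prefixPlay f n).snoc (f n).1 (f n).2

/-- A play-measure is well-founded when no infinite play has all its
prefixes in the support. -/
def PlayMeasure.WellFoundedPM (σ : PlayMeasure K ar) : Prop :=
  ¬ ∃ f : ℕ → Σ k : K, ar k, ∀ n, 0 < σ.pass (prefixPlay f n) (f n).1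

/-- A play-measure is finitely branching when each active-ending play has
finitely many possible next outputs in the support. -/
def PlayMeasure.FinBranch (σ : PlayMeasure K ar) : Prop :=
  ∀ t : APlay K ar, {k : K | 0 < σ.pass t k}.Finite

/-- Finitely founded: well-founded and finitely branching. -/
def PlayMeasure.FinFounded (σ : PlayMeasure K ar) : Prop :=
  σ.WellFoundedPM ∧ σ.FinBranch

/-- `f` is uniformly below `g`: there is `d > 0` with `f s + d ≤ g s` on
every passive-ending play `s` in the support of `f`. -/
def UBelow (f g : APlay K ar → K → ℝ≥0∞) : Prop :=
  ∃ d : ℝ≥0∞, 0 < d ∧ ∀ s k, 0 < f s k → f s k + d ≤ g s k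


/-- The shift of a play-measure along an output-input pair. -/
noncomputable def PlayMeasure.shift (σ : PlayMeasure K ar) (k : K) (i : ar k) :
    PlayMeasure K ar where
  pass := fun s l => σ.pass (.cons k i s) l
  le_one := fun t => σ.le_one (.cons k i t)
  consistent := fun s l j => σ.consistent (.cons k i s) l j

lemma PlayMeasure.shift_weight_le (σ : PlayMeasure K ar) (k : K) (i : ar k) :
    (σ.shift k i).weight ≤ σ.weight := by
  have h1 : (σ.shift k i).weight = σ.pass .nil k := by
    have := σ.consistent .nil k i
    simp only [PlayMeasure.weight, PlayMeasure.act, PlayMeasure.shift]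
    simp only [APlay.snoc] at this
    exact this.symm
  rw [h1]
  exact ENNReal.le_tsum k

lemma PlayMeasure.pass_le_weight (σ : PlayMeasure K ar) (s : APlay K ar) (k : K) :
    σ.pass s k ≤ σ.weight := by
  induction s generalizing σ with
  | nil => exact ENNReal.le_tsum k
  | cons l j s ih =>
      exact le_trans (ih (σ.shift l j)) (σ.shift_weight_le l j)

/-- If the play-measure `σ` is uniformly below the sum of a sequence of
play-measures `(τ i)` of total weight `λ ∈ [0,1]`, then it is uniformly below
some finite partial sum. -/
theorem stmt_2 {K : Type} {ar : K → Type}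
    (τ : ℕ → PlayMeasure K ar) (lam : ℝ≥0∞) (hlam : lam ≤ 1)
    (hw : (∑' i, (τ i).weight) = lam)
    (σ : PlayMeasure K ar)
    (h : UBelow σ.pass (fun s k => ∑' i, (τ i).pass s k)) :
    ∃ n : ℕ, UBelow σ.pass (fun s k => ∑ i ∈ Finset.range n, (τ i).pass s k) := by
  obtain ⟨d, hd0, hd⟩ := h
  set d' : ℝ≥0∞ := min d 1 with hd'
  have hd'0 : 0 < d' := lt_min hd0 zero_lt_one
  have hd'top : d' ≠ ⊤ := ne_top_of_le_ne_top ENNReal.one_ne_top (min_le_right _ _)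
  have hhalf0 : 0 < d' / 2 := ENNReal.half_pos hd'0.ne'
  have hhalftop : d' / 2 ≠ ⊤ := by
    exact ne_top_of_le_ne_top hd'top ENNReal.half_le_self
  have htot : (∑' i, (τ i).weight) ≠ ⊤ := by
    rw [hw]; exact ne_top_of_le_ne_top ENNReal.one_ne_top hlam
  have htail := ENNReal.tendsto_sum_nat_add (fun i => (τ i).weight) htot
  have hev := htail.eventually (gt_mem_nhds hhalf0)
  obtain ⟨n, hn⟩ := hev.exists
  refine ⟨n, d' / 2, hhalf0, fun s k hs => ?_⟩
  have H := hd s k hs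
  have hsplit : (∑ i ∈ Finset.range n, (τ i).pass s k) + ∑' i, (τ (i + n)).pass s k
      = ∑' i, (τ i).pass s k := Summable.sum_add_tsum_nat_add' (f := fun i => (τ i).pass s k) (k := n) ENNReal.summable
  have htail2 : (∑' i, (τ (i + n)).pass s k) ≤ ∑' i, (τ (i + n)).weight :=
    ENNReal.tsum_le_tsum fun i => (τ (i + n)).pass_le_weight s k
  have hkey : σ.pass s k + d' / 2 + d' / 2 ≤
      (∑ i ∈ Finset.range n, (τ i).pass s k) + d' / 2 := by
    calc σ.pass s k + d' / 2 + d' / 2 = σ.pass s k + d' := by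
          rw [add_assoc, ENNReal.add_halves]
      _ ≤ σ.pass s k + d := add_le_add_right (min_le_left _ _) _
      _ ≤ ∑' i, (τ i).pass s k := H
      _ = (∑ i ∈ Finset.range n, (τ i).pass s k) + ∑' i, (τ (i + n)).pass s k :=
          hsplit.symm
      _ ≤ (∑ i ∈ Finset.range n, (τ i).pass s k) + d' / 2 :=
          add_le_add_right (htail2.trans hn.le) _
  exact (ENNReal.add_le_add_iff_right hhalftop).mp hkey
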